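/- Let p : ℝ^N × (0,T) → [0,p_M] be C¹ in t and C² in x, with x ↦ p(x,t) compactly supported for each t ∈ (0,T), solving the equation ∂_t p = γ p Δp + |∇p|² + γ p G(p) pointwise in ℝ^N × (0,T), and satisfying the Aronson–Bénilan-type bound ∂_t p(x,t) ≥ −γ c p(x,t) e^{−γct}/(1 − e^{−γct}) for all (x,t). Then for every t ∈ (0,T): (γ − 1) ∫_{ℝ^N} |∇p(x,t)|² dx ≤ γ (G(0) + c e^{−γct}/(1 − e^{−γct})) ∫_{ℝ^N} p(x,t) dx. -/

import Mathlib

open MeasureTheory Metric Set Filter Real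
open scoped ENNReal RealInnerProductSpace

noncomputable section

/-- Euclidean space `ℝ^N`. -/
abbrev Euc (N : ℕ) : Type := EuclideanSpace ℝ (Fin N)

/-- The spatial Laplacian of a function on `ℝ^N`. -/
def lap {N : ℕ} (φ : Euc N → ℝ) (x : Euc N) : ℝ :=
  ∑ i : Fin N, fderiv ℝ (fderiv ℝ φ) x (EuclideanSpace.single i 1) (EuclideanSpace.single i 1)

/-- Smooth, compactly supported test functions on `ℝ^N`. -/
def IsTestFun {N : ℕ} (φ : Euc N → ℝ) : Prop :=
  ContDiff ℝ (⊤ : ℕ∞) φ ∧ HasCompactSupport φ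

/-- Smooth test functions compactly supported in `Q = ℝ^N × (0,∞)`. -/
def IsTestFunQ {N : ℕ} (φ : Euc N × ℝ → ℝ) : Prop :=
  ContDiff ℝ (⊤ : ℕ∞) φ ∧ HasCompactSupport φ ∧ tsupport φ ⊆ {q : Euc N × ℝ | 0 < q.2}

/-- The parabolic domain `Q = ℝ^N × (0,∞)`. -/
def Qset (N : ℕ) : Set (Euc N × ℝ) := Set.univ ×ˢ Set.Ioi (0 : ℝ)

/-- **Estimate (3.6) of Lemma 3.2.** For a classical, compactly supported solution of
`∂ₜ p = γ p Δp + |∇p|² + γ p G(p)` on `(0,T)` satisfying the Aronson–Bénilan type bound,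
one has `(γ-1) ∫ |∇p(t)|² ≤ γ (G(0) + c e^{-γct}/(1-e^{-γct})) ∫ p(t)` for `t ∈ (0,T)`. -/
lemma grad_apply {N : ℕ} (φ : Euc N → ℝ) (x : Euc N) (i : Fin N) :
    gradient φ x i = fderiv ℝ φ x (EuclideanSpace.single i 1) := by
  have h : ⟪gradient φ x, EuclideanSpace.single i 1⟫
      = fderiv ℝ φ x (EuclideanSpace.single i 1) := by
    rw [gradient]
    exact InnerProductSpace.toDual_symm_apply
  rw [← h, EuclideanSpace.inner_single_right]
  simp [mul_comm]

lemma norm_gradient_sq {N : ℕ} (φ : Euc N → ℝ) (x : Euc N) :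
    ‖gradient φ x‖ ^ 2 = ∑ i : Fin N, (fderiv ℝ φ x (EuclideanSpace.single i 1)) ^ 2 := by
  rw [EuclideanSpace.norm_eq, Real.sq_sqrt (by positivity)]
  exact Finset.sum_congr rfl fun i _ => by rw [← grad_apply φ x i]; simp [sq_abs]

lemma integral_mul_lap {N : ℕ} (φ : Euc N → ℝ) (hφ : ContDiff ℝ 2 φ) (hs : HasCompactSupport φ) :
    ∫ x, φ x * lap φ x = - ∫ x, ‖gradient φ x‖ ^ 2 := by
  have hφ1 : ContDiff ℝ 1 (fderiv ℝ φ) := hφ.fderiv_right (by norm_num)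
  have hder : Differentiable ℝ φ := hφ.differentiable (by norm_num)
  have hfc : HasCompactSupport (fderiv ℝ φ) := hs.fderiv (𝕜 := ℝ)
  set E : Fin N → Euc N := fun i => EuclideanSpace.single i 1 with hE
  set g : Fin N → Euc N → ℝ := fun i x => fderiv ℝ φ x (E i) with hg
  have hgi : ∀ i, ContDiff ℝ 1 (g i) := fun i => hφ1.clm_apply contDiff_const
  have hgisupp : ∀ i, HasCompactSupport (g i) := fun i =>
    hfc.comp_left (g := fun L : Euc N →L[ℝ] ℝ => L (E i)) rfl
  have hkey : ∀ i, ∫ x, φ x * fderiv ℝ (fderiv ℝ φ) x (E i) (E i) = - ∫ x, (g i x) ^ 2 := by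
    intro i
    have hderiv_eq : ∀ x, fderiv ℝ (g i) x (E i) = fderiv ℝ (fderiv ℝ φ) x (E i) (E i) := by
      intro x
      rw [hg]
      rw [fderiv_clm_apply (hφ1.differentiable one_ne_zero x) (differentiableAt_const _)]
      simp
    have hcont_d : Continuous fun x => fderiv ℝ (g i) x (E i) :=
      (((hgi i).fderiv_right (m := 0) (by norm_num)).clm_apply contDiff_const).continuous
    have I1 : Integrable fun x => fderiv ℝ φ x (E i) * g i x := by
      apply Continuous.integrable_of_hasCompactSupport
      · exact ((hgi i).continuous).mul ((hgi i).continuous)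
      · exact (hgisupp i).mul_right
    have I2 : Integrable fun x => φ x * fderiv ℝ (g i) x (E i) := by
      apply Continuous.integrable_of_hasCompactSupport
      · exact hφ.continuous.mul hcont_d
      · exact hs.mul_right
    have I3 : Integrable fun x => φ x * g i x := by
      apply Continuous.integrable_of_hasCompactSupport
      · exact hφ.continuous.mul ((hgi i).continuous)
      · exact hs.mul_right
    have hibp := integral_mul_fderiv_eq_neg_fderiv_mul_of_integrable (μ := volume)
      I1 I2 I3 (fun x _ => hder x) (fun x _ => (hgi i).differentiable one_ne_zero x) (v := E i)
    have hsq : ∀ x, fderiv ℝ φ x (E i) * g i x = (g i x) ^ 2 := fun x => by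
      rw [pow_two]
    calc ∫ x, φ x * fderiv ℝ (fderiv ℝ φ) x (E i) (E i)
        = ∫ x, φ x * fderiv ℝ (g i) x (E i) := by simp only [hderiv_eq]
      _ = - ∫ x, fderiv ℝ φ x (E i) * g i x := hibp
      _ = - ∫ x, (g i x) ^ 2 := by simp only [hsq]
  have Ii : ∀ i : Fin N, Integrable fun x => φ x * fderiv ℝ (fderiv ℝ φ) x (E i) (E i) := by
    intro i
    apply Continuous.integrable_of_hasCompactSupport
    · exact hφ.continuous.mul
        (((hφ1.fderiv_right (m := 0) (by norm_num)).clm_apply contDiff_const).clm_apply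
          contDiff_const).continuous
    · exact hs.mul_right
  have Ig : ∀ i : Fin N, Integrable fun x => (g i x) ^ 2 := by
    intro i
    apply Continuous.integrable_of_hasCompactSupport
    · exact ((hgi i).continuous).pow 2
    · exact (hgisupp i).comp_left (g := fun y : ℝ => y ^ 2) (by simp)
  have hns : ∀ x, ‖gradient φ x‖ ^ 2 = ∑ i : Fin N, (g i x) ^ 2 := fun x => norm_gradient_sq φ x
  calc ∫ x, φ x * lap φ x
      = ∫ x, ∑ i : Fin N, φ x * fderiv ℝ (fderiv ℝ φ) x (E i) (E i) := by
        simp only [lap, Finset.mul_sum, hE]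
    _ = ∑ i : Fin N, ∫ x, φ x * fderiv ℝ (fderiv ℝ φ) x (E i) (E i) :=
        integral_finset_sum _ (fun i _ => Ii i)
    _ = ∑ i : Fin N, -∫ x, (g i x) ^ 2 := Finset.sum_congr rfl fun i _ => hkey i
    _ = - ∑ i : Fin N, ∫ x, (g i x) ^ 2 := by rw [Finset.sum_neg_distrib]
    _ = - ∫ x, ∑ i : Fin N, (g i x) ^ 2 := by rw [integral_finset_sum _ (fun i _ => Ig i)]
    _ = - ∫ x, ‖gradient φ x‖ ^ 2 := by simp only [hns]

theorem H1_estimate {N : ℕ} (hN : 1 ≤ N) (γ c pM T : ℝ)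
    (hγ : 1 < γ) (hc : 0 < c) (hpM : 0 < pM) (hT : 0 < T)
    (G : ℝ → ℝ) (hGsmooth : ContDiff ℝ 1 G) (hGanti : StrictAntiOn G (Set.Ici 0))
    (hGpM : G pM = 0)
    (p : Euc N → ℝ → ℝ)
    (hx2 : ∀ t ∈ Set.Ioo (0:ℝ) T, ContDiff ℝ 2 fun x => p x t)
    (ht1 : ∀ x : Euc N, ContDiffOn ℝ 1 (p x) (Set.Ioo 0 T))
    (hrange : ∀ (x : Euc N), ∀ t ∈ Set.Ioo (0:ℝ) T, p x t ∈ Set.Icc 0 pM)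
    (hsupp : ∀ t ∈ Set.Ioo (0:ℝ) T, HasCompactSupport fun x => p x t)
    (hpde : ∀ (x : Euc N), ∀ t ∈ Set.Ioo (0:ℝ) T,
      deriv (p x) t = γ * p x t * lap (fun y => p y t) x
        + ‖gradient (fun y => p y t) x‖ ^ 2 + γ * p x t * G (p x t))
    (hAB : ∀ (x : Euc N), ∀ t ∈ Set.Ioo (0:ℝ) T,
      -(γ * c * p x t * Real.exp (-(γ * c * t)) / (1 - Real.exp (-(γ * c * t))))
        ≤ deriv (p x) t) :
    ∀ t ∈ Set.Ioo (0:ℝ) T,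
      (γ - 1) * ∫ x, ‖gradient (fun y => p y t) x‖ ^ 2
        ≤ γ * (G 0 + c * Real.exp (-(γ * c * t)) / (1 - Real.exp (-(γ * c * t))))
          * ∫ x, p x t := by
  intro t ht
  have hγ0 : (0:ℝ) < γ := lt_trans one_pos hγ
  set φ : Euc N → ℝ := fun x => p x t with hφdef
  have hφ : ContDiff ℝ 2 φ := hx2 t ht
  have hsc : HasCompactSupport φ := hsupp t ht
  have hgrad_cont : Continuous fun x => ‖gradient φ x‖ ^ 2 := by
    have h1 : Continuous (fderiv ℝ φ) := (hφ.fderiv_right (m := 1) (by norm_num)).continuous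
    exact (((InnerProductSpace.toDual ℝ (Euc N)).symm.continuous.comp h1).norm.pow 2)
  have hgrad_supp : HasCompactSupport fun x => ‖gradient φ x‖ ^ 2 := by
    have h1 : HasCompactSupport (fderiv ℝ φ) := hsc.fderiv (𝕜 := ℝ)
    have h2 : HasCompactSupport fun x => gradient φ x :=
      h1.comp_left (g := fun L => (InnerProductSpace.toDual ℝ (Euc N)).symm L) (map_zero _)
    exact h2.comp_left (g := fun v => ‖v‖ ^ 2) (by simp)
  have Iφ : Integrable φ := hφ.continuous.integrable_of_hasCompactSupport hsc
  have Igrad : Integrable (fun x => ‖gradient φ x‖ ^ 2) :=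
    hgrad_cont.integrable_of_hasCompactSupport hgrad_supp
  have hlapc : Continuous (lap φ) := by
    unfold lap
    apply continuous_finset_sum
    intro i _
    exact ((((hφ.fderiv_right (m := 1) (by norm_num)).fderiv_right (m := 0)
      (by norm_num)).clm_apply contDiff_const).clm_apply contDiff_const).continuous
  have Ilap : Integrable (fun x => φ x * lap φ x) :=
    (hφ.continuous.mul hlapc).integrable_of_hasCompactSupport hsc.mul_right
  have IpG : Integrable (fun x => φ x * G (φ x)) :=
    (hφ.continuous.mul (hGsmooth.continuous.comp hφ.continuous)).integrable_of_hasCompactSupport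
      hsc.mul_right
  set Ee := Real.exp (-(γ * c * t)) with hEe
  have hEe0 : 0 < Ee := Real.exp_pos _
  have hEe1 : Ee < 1 := by
    rw [hEe, Real.exp_lt_one_iff]
    have : 0 < γ * c * t := by
      apply mul_pos (mul_pos hγ0 hc) ht.1
    linarith
  have hden : 0 < 1 - Ee := by linarith
  set K := c * Ee / (1 - Ee) with hK
  have hK0 : 0 ≤ K := div_nonneg (mul_nonneg hc.le hEe0.le) hden.le
  have hpt : ∀ x, -(γ * K * φ x)
      ≤ γ * φ x * lap φ x + ‖gradient φ x‖ ^ 2 + γ * φ x * G (φ x) := by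
    intro x
    have h1 := hAB x t ht
    rw [hpde x t ht] at h1
    have h2 : -(γ * c * p x t * Ee / (1 - Ee)) = -(γ * K * φ x) := by
      simp only [hφdef, hK]
      ring
    rw [h2] at h1
    exact h1
  have IR : Integrable (fun x =>
      γ * φ x * lap φ x + ‖gradient φ x‖ ^ 2 + γ * φ x * G (φ x)) := by
    have h1 : Integrable (fun x => γ * (φ x * lap φ x)) := Ilap.const_mul γ
    have h2 : Integrable (fun x => γ * (φ x * G (φ x))) := IpG.const_mul γ
    have := (h1.add Igrad).add h2
    simpa [mul_assoc, Pi.add_def] using this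
  have hint : ∫ x, -(γ * K * φ x)
      ≤ ∫ x, (γ * φ x * lap φ x + ‖gradient φ x‖ ^ 2 + γ * φ x * G (φ x)) := by
    apply integral_mono _ IR hpt
    exact ((Iφ.const_mul (γ * K)).neg')
  have hL : ∫ x, -(γ * K * φ x) = -(γ * K) * ∫ x, φ x := by
    have : ∀ x : Euc N, -(γ * K * φ x) = (-(γ * K)) * φ x := fun x => by ring
    simp only [this]
    rw [integral_const_mul]
  have hR : ∫ x, (γ * φ x * lap φ x + ‖gradient φ x‖ ^ 2 + γ * φ x * G (φ x))
      = (γ * ∫ x, φ x * lap φ x) + (∫ x, ‖gradient φ x‖ ^ 2) + γ * ∫ x, φ x * G (φ x) := by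
    have e1 : ∀ x : Euc N, γ * φ x * lap φ x + ‖gradient φ x‖ ^ 2 + γ * φ x * G (φ x)
        = γ * (φ x * lap φ x) + ‖gradient φ x‖ ^ 2 + γ * (φ x * G (φ x)) := fun x => by ring
    simp only [e1]
    have hadd1 : Integrable (fun x => γ * (φ x * lap φ x) + ‖gradient φ x‖ ^ 2) := by
      simpa [Pi.add_def] using (Ilap.const_mul γ).add Igrad
    rw [integral_add hadd1 (IpG.const_mul γ), integral_add (Ilap.const_mul γ) Igrad,
      integral_const_mul, integral_const_mul]
  have hibp : ∫ x, φ x * lap φ x = - ∫ x, ‖gradient φ x‖ ^ 2 := integral_mul_lap φ hφ hsc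
  have hGle : ∫ x, φ x * G (φ x) ≤ G 0 * ∫ x, φ x := by
    rw [← integral_const_mul]
    apply integral_mono IpG (Iφ.const_mul _)
    intro x
    have h0 := hrange x t ht
    have hG0 : G (φ x) ≤ G 0 :=
      hGanti.antitoneOn (le_refl (0:ℝ)) h0.1 h0.1
    calc φ x * G (φ x) ≤ φ x * G 0 := mul_le_mul_of_nonneg_left hG0 h0.1
      _ = G 0 * φ x := mul_comm _ _
  rw [hL, hR, hibp] at hint
  have hmul : γ * ∫ x, φ x * G (φ x) ≤ γ * (G 0 * ∫ x, φ x) :=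
    mul_le_mul_of_nonneg_left hGle hγ0.le
  show (γ - 1) * ∫ x, ‖gradient φ x‖ ^ 2 ≤ γ * (G 0 + K) * ∫ x, φ x
  nlinarith [hint, hmul]
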